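/- Let X be an abelian Polish group, let A ⊆ X be a Borel set belonging to F(X) (i.e., for every compact set K ⊆ X there exists x ∈ X with K + x ⊆ A), and let C ⊆ ℝ be a comeager Borel set. Then the set C × A is not Haar meager in the abelian Polish group ℝ × X. -/

import Mathlib

open MeasureTheory Set

open TopologicalSpace in
/-- Sections of a closed set with empty interior are nowhere dense for residually many
first coordinates. -/
lemma residual_section_nwd {α β : Type*} [TopologicalSpace α] [TopologicalSpace β]
    [SecondCountableTopology β] {F : Set (α × β)} (hF : IsClosed F)
    (hFi : interior F = ∅) :
    ∃ R ∈ residual α, ∀ a ∈ R, IsNowhereDense {b | (a, b) ∈ F} := by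
  refine ⟨⋂ V ∈ countableBasis β, {a | ∃ b ∈ V, (a, b) ∉ F}, ?_, ?_⟩
  · refine (countable_bInter_mem (countable_countableBasis β)).2 fun V hV => ?_
    refine residual_of_dense_open ?_ ?_
    · rw [show {a | ∃ b ∈ V, (a, b) ∉ F} = (⋂ b ∈ V, {a | (a, b) ∈ F})ᶜ by
        ext a; simp]
      exact (isClosed_biInter fun b _ =>
        hF.preimage (continuous_id.prodMk continuous_const)).isOpen_compl
    · rw [dense_iff_inter_open]
      intro U hU hUne
      by_contra h
      rw [not_nonempty_iff_eq_empty, eq_empty_iff_forall_notMem] at h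
      have hsub : U ×ˢ V ⊆ F := by
        rintro ⟨a, b⟩ ⟨ha, hb⟩
        by_contra hab
        exact h a ⟨ha, b, hb, hab⟩
      have : U ×ˢ V ⊆ interior F :=
        (hU.prod (isOpen_of_mem_countableBasis hV)).subset_interior_iff.2 hsub
      rw [hFi, subset_empty_iff, Set.prod_eq_empty_iff] at this
      rcases this with h1 | h2
      · exact hUne.ne_empty h1
      · exact (nonempty_of_mem_countableBasis hV).ne_empty h2
  · intro a ha
    have hcl : IsClosed {b | (a, b) ∈ F} :=
      hF.preimage (continuous_const.prodMk continuous_id)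
    rw [hcl.isNowhereDense_iff, eq_empty_iff_forall_notMem]
    intro b hb
    obtain ⟨V, hV, hbV, hVsub⟩ :=
      (isBasis_countableBasis β).exists_subset_of_mem_open hb isOpen_interior
    simp only [mem_iInter] at ha
    obtain ⟨b', hb'V, hb'F⟩ := ha V hV
    have : b' ∈ {b | (a, b) ∈ F} := interior_subset (hVsub hb'V)
    exact hb'F this

/-- A Kuratowski–Ulam style lemma: a meager subset of `α × β` has a meager section. -/
lemma exists_section_meager {α β : Type*} [TopologicalSpace α] [TopologicalSpace β]
    [BaireSpace α] [Nonempty α] [SecondCountableTopology β] {M : Set (α × β)}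
    (hM : IsMeagre M) : ∃ a, IsMeagre {b | (a, b) ∈ M} := by
  obtain ⟨S, hSo, hSd, hSc, hSsub⟩ := mem_residual_iff.1 hM
  have key : ∀ t ∈ S, ∃ R ∈ residual α, ∀ a ∈ R, IsNowhereDense {b | (a, b) ∈ tᶜ} := by
    intro t ht
    exact residual_section_nwd (hSo t ht).isClosed_compl
      (by rw [interior_compl, (hSd t ht).closure_eq, compl_univ])
  choose R hR hRnwd using key
  have hres : (⋂ t ∈ S, R t ‹_›) ∈ residual α := (countable_bInter_mem hSc).2 hR
  obtain ⟨a, ha⟩ := (dense_of_mem_residual hres).nonempty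
  simp only [mem_iInter] at ha
  refine ⟨a, isMeagre_iff_countable_union_isNowhereDense.2
    ⟨(fun t : Set (α × β) => {b | (a, b) ∈ tᶜ}) '' S, ?_, hSc.image _, ?_⟩⟩
  · rintro _ ⟨t, ht, rfl⟩
    exact hRnwd t ht a (ha t ht)
  · intro b hb
    have : (a, b) ∉ ⋂₀ S := fun h => hSsub h hb
    rw [mem_sInter] at this
    push_neg at this
    obtain ⟨t, htS, htab⟩ := this
    exact ⟨_, ⟨t, htS, rfl⟩, htab⟩

open TopologicalSpace in
/-- A set in a topological abelian group is *Haar meager* if there is a Borel set `B ⊇ A`,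
a nonempty compact metric space `K` and a continuous `f : K → G` such that `f ⁻¹' (B + x)`
is meager in `K` for every `x ∈ G`. -/
def IsHaarMeager {G : Type*} [TopologicalSpace G] [AddCommGroup G] (A : Set G) : Prop :=
  ∃ B : Set G, A ⊆ B ∧ MeasurableSet[borel G] B ∧
    ∃ (K : Type) (_ : MetricSpace K) (_ : CompactSpace K) (_ : Nonempty K) (f : K → G),
      Continuous f ∧ ∀ x : G, IsMeagre (f ⁻¹' ((fun b => b + x) '' B))

/-- A set in a topological abelian group is *Haar null* if there is a Borel probability
measure `μ` and a Borel set `B ⊇ A` with `μ (x + B) = 0` for every `x ∈ G`. -/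
def IsHaarNull {G : Type*} [TopologicalSpace G] [AddCommGroup G] (A : Set G) : Prop :=
  ∃ μ : @Measure G (borel G), @IsProbabilityMeasure G (borel G) μ ∧
    ∃ B : Set G, A ⊆ B ∧ MeasurableSet[borel G] B ∧
      ∀ x : G, μ ((fun b => x + b) '' B) = 0

/-- If `A ⊆ X` is a Borel set such that every compact set admits a translate inside `A`,
and `C ⊆ ℝ` is a comeager Borel set, then `C × A` is not Haar meager in `ℝ × X`. -/
theorem not_haarMeager_comeager_prod {X : Type*}
    [TopologicalSpace X] [AddCommGroup X] [IsTopologicalAddGroup X] [PolishSpace X]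
    (A : Set X) (hA : MeasurableSet[borel X] A)
    (hAF : ∀ K : Set X, IsCompact K → ∃ x : X, (fun k => k + x) '' K ⊆ A)
    (C : Set ℝ) (hC : MeasurableSet[borel ℝ] C) (hCco : IsMeagre Cᶜ) :
    ¬ IsHaarMeager (C ×ˢ A) := by
  rintro ⟨B, hCAB, hBmeas, K, _, _, _, f, hf, hmeager⟩
  set r : K → ℝ := fun k => (f k).1 with hr
  set s : K → X := fun k => (f k).2 with hs
  have hrc : Continuous r := continuous_fst.comp hf
  have hsc : Continuous s := continuous_snd.comp hf
  obtain ⟨x₀, hx₀⟩ := hAF (Set.range s) (isCompact_range hsc)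
  have hsA : ∀ k, s k + x₀ ∈ A := fun k => hx₀ ⟨s k, ⟨k, rfl⟩, rfl⟩
  set φ : ℝ × K → ℝ := fun p => r p.2 - p.1 with hφ
  have hφc : Continuous φ := (hrc.comp continuous_snd).sub continuous_fst
  have hφo : IsOpenMap φ := by
    intro U hU
    have himg : φ '' U = ⋃ k : K, (fun t => r k - t) '' {t | (t, k) ∈ U} := by
      ext y
      constructor
      · rintro ⟨⟨t, k⟩, hU', rfl⟩
        exact Set.mem_iUnion.2 ⟨k, t, hU', rfl⟩
      · rintro h
        obtain ⟨k, t, htU, rfl⟩ := Set.mem_iUnion.1 h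
        exact ⟨(t, k), htU, rfl⟩
    rw [himg]
    refine isOpen_iUnion fun k => ?_
    have : IsOpenMap (fun t : ℝ => r k - t) := by
      have : (fun t : ℝ => r k - t) = (fun t : ℝ => t + r k) ∘ Neg.neg := by
        funext t; simp [sub_eq_neg_add, add_comm]
      rw [this]
      exact (Homeomorph.addRight (r k)).isOpenMap.comp (Homeomorph.neg ℝ).isOpenMap
    exact this _ (hU.preimage (continuous_id.prodMk continuous_const))
  have hM : IsMeagre (φ ⁻¹' Cᶜ) := hCco.preimage_of_isOpenMap hφc hφo
  obtain ⟨t, ht⟩ := exists_section_meager hM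
  -- `ht : IsMeagre {k | r k - t ∈ Cᶜ}`
  set S : Set K := {k | r k - t ∈ C} with hS
  have htS : IsMeagre Sᶜ := ht
  have hsub : S ⊆ f ⁻¹' ((fun b => b + (t, -x₀)) '' B) := by
    intro k hk
    refine ⟨(r k - t, s k + x₀), hCAB ⟨hk, hsA k⟩, ?_⟩
    have : f k = (r k, s k) := rfl
    rw [this]
    ext <;> simp
  have hSm : IsMeagre S := (hmeager (t, -x₀)).mono hsub
  have hmem : Sᶜ ∩ S ∈ residual K := Filter.inter_mem hSm (compl_compl S ▸ (htS : Sᶜᶜ ∈ residual K))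
  have : Dense (Sᶜ ∩ S) := dense_of_mem_residual hmem
  rw [compl_inter_self] at this
  exact this.nonempty.ne_empty rfl
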